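/- arXiv:2406.12777 — 3 statements merged into one kernel-verified Lean document; each statement's English description precedes it below -/
import Mathlib

section
/- Let G be a finitely generated group, let ρ : G → H be a group epimorphism, and let X ⊆ A^H be a subshift. Let ρ*(X) = {x ∘ ρ : x ∈ X} ⊆ A^G be the pullback subshift. Then m(X) = m(ρ*(X)). -/
namespace MedvedevFormal

/-! ### Medvedev reducibility on Baire space -/

/-- The finite prefix of length `k` of a point of Baire space, as a list. -/
def pref (x : ℕ → ℕ) (k : ℕ) : List ℕ := (List.range k).map x

/-- Medvedev reducibility `m(P) ≤ m(Q)` between subsets of Baire space: some computable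
monotone prefix-functional (i.e. a partial computable type-two functional), defined on all
of `Q`, maps every element of `Q` to an element of `P`. -/
def BaireLE (P Q : Set (ℕ → ℕ)) : Prop :=
  ∃ φ : List ℕ → List ℕ, Computable φ ∧
    (∀ l₁ l₂ : List ℕ, l₁ <+: l₂ → φ l₁ <+: φ l₂) ∧
    ∀ x ∈ Q, ∃ y ∈ P, ∀ n : ℕ, ∃ k : ℕ, (φ (pref x k))[n]? = some (y n)

/-- Medvedev equivalence: `m(P) = m(Q)`. -/
def BaireEquiv (P Q : Set (ℕ → ℕ)) : Prop := BaireLE P Q ∧ BaireLE Q P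

/-- A canonical representative of the join `m(P) ∨ m(Q)`. -/
def joinSet (P Q : Set (ℕ → ℕ)) : Set (ℕ → ℕ) :=
  {x | (fun n => x (2 * n)) ∈ P ∧ (fun n => x (2 * n + 1)) ∈ Q}

/-- A canonical representative of the meet `m(P) ∧ m(Q)`. -/
def meetSet (P Q : Set (ℕ → ℕ)) : Set (ℕ → ℕ) :=
  {x | (x 0 = 0 ∧ (fun n => x (n + 1)) ∈ P) ∨ (x 0 = 1 ∧ (fun n => x (n + 1)) ∈ Q)}

/-- `P` has the zero Medvedev degree `0_M`: it contains a computable point. -/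
def IsZeroDeg (P : Set (ℕ → ℕ)) : Prop := ∃ y ∈ P, Computable y

/-- The cylinder of a finite word in Baire space. -/
def cylinder (l : List ℕ) : Set (ℕ → ℕ) :=
  {x | ∀ (i : ℕ) (h : i < l.length), x i = l[i]}

/-- Cantor space `{0,1}^ℕ` inside Baire space. -/
def cantorSpace : Set (ℕ → ℕ) := {x | ∀ n, x n ≤ 1}

/-- `P` is an effectively closed (`Π⁰₁`) subset of Cantor space: its complement within
Cantor space is the union of the cylinders of a computably enumerable sequence of words. -/
def IsPi01Cantor (P : Set (ℕ → ℕ)) : Prop :=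
  ∃ f : ℕ → List ℕ, Computable f ∧ P = cantorSpace \ ⋃ n, cylinder (f n)

/-- The Medvedev degree of `P` is a `Π⁰₁` Medvedev degree. -/
def IsPi01Deg (P : Set (ℕ → ℕ)) : Prop :=
  ∃ Q, IsPi01Cantor Q ∧ Q.Nonempty ∧ BaireEquiv P Q

/-- `P` realizes the maximal `Π⁰₁` Medvedev degree (the degree of the class of complete
consistent extensions of Peano arithmetic): it is a nonempty `Π⁰₁` subset of Cantor space
to which every nonempty `Π⁰₁` subset of Cantor space is Medvedev reducible. -/
def IsMaxPi01 (P : Set (ℕ → ℕ)) : Prop :=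
  IsPi01Cantor P ∧ P.Nonempty ∧ ∀ Q, IsPi01Cantor Q → Q.Nonempty → BaireLE Q P

/-! ### Encoding of configuration spaces -/

/-- The canonical encoding of a configuration `x : α → A` as a point of Baire space. -/
def confFun {α A : Type*} [Encodable α] [Encodable A] (x : α → A) : ℕ → ℕ :=
  fun n => Encodable.encode ((Encodable.decode (α := α) n).map x)

/-- The image of a set of configurations in Baire space, used to measure its
Medvedev degree. -/
def mSet {α A : Type*} [Encodable α] [Encodable A] (X : Set (α → A)) : Set (ℕ → ℕ) :=
  confFun '' X

/-- A configuration is computable if its Baire-space encoding is computable. -/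
def ComputablePoint {α A : Type*} [Encodable α] [Encodable A] (x : α → A) : Prop :=
  Computable (confFun x)

/-- `m(X) ≤ m(Y)` for sets of configurations. -/
def MedLE {α A β B : Type*} [Encodable α] [Encodable A] [Encodable β] [Encodable B]
    (X : Set (α → A)) (Y : Set (β → B)) : Prop :=
  BaireLE (mSet X) (mSet Y)

/-- `m(X) = m(Y)` for sets of configurations. -/
def MedEquiv {α A β B : Type*} [Encodable α] [Encodable A] [Encodable β] [Encodable B]
    (X : Set (α → A)) (Y : Set (β → B)) : Prop :=
  MedLE X Y ∧ MedLE Y X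

/-! ### Subshifts -/

/-- The left shift action: `(g • x) h = x (g⁻¹ h)`. -/
def shift {G A : Type*} [Group G] (g : G) (x : G → A) : G → A := fun h => x (g⁻¹ * h)

/-- The prodiscrete topology on `A^G`. -/
def prodiscrete (G A : Type*) : TopologicalSpace (G → A) :=
  @Pi.topologicalSpace G (fun _ => A) fun _ => ⊥

/-- A subshift: a shift-invariant subset of `A^G`, closed in the prodiscrete topology. -/
def IsSubshift {G A : Type*} [Group G] (X : Set (G → A)) : Prop :=
  (∀ x ∈ X, ∀ g : G, shift g x ∈ X) ∧ @IsClosed (G → A) (prodiscrete G A) X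

/-- A pattern: a map `p : D → A` with `D ⊆ G` finite. -/
structure Pattern (G A : Type*) where
  dom : Finset G
  val : {g // g ∈ dom} → A

/-- The translate `g • x` agrees with the pattern `p` on its domain. -/
def MatchesAt {G A : Type*} [Group G] (p : Pattern G A) (g : G) (x : G → A) : Prop :=
  ∀ h : {g' // g' ∈ p.dom}, shift g x h = p.val h

/-- A subshift of finite type: defined by a finite list of forbidden patterns. -/
def IsSFT {G A : Type*} [Group G] (X : Set (G → A)) : Prop :=
  ∃ F : List (Pattern G A), X = {x | ∀ p ∈ F, ∀ g : G, ¬MatchesAt p g x}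

/-- A morphism between subshifts: a continuous shift-equivariant map from `X` to `Y`. -/
def IsMorphism {G A B : Type*} [Group G] (X : Set (G → A)) (Y : Set (G → B))
    (φ : (G → A) → (G → B)) : Prop :=
  Set.MapsTo φ X Y ∧
    @ContinuousOn (G → A) (G → B) (prodiscrete G A) (prodiscrete G B) φ X ∧
    ∀ x ∈ X, ∀ g : G, φ (shift g x) = shift g (φ x)

/-- A sofic subshift: the image of an SFT (on some finite alphabet) under a topological
factor map. -/
def IsSofic {G A : Type*} [Group G] (X : Set (G → A)) : Prop :=
  ∃ (B : Type) (_ : Finite B) (Y : Set (G → B)) (φ : (G → B) → (G → A)),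
    IsSFT Y ∧ IsMorphism Y X φ ∧ φ '' Y = X

/-! ### Finitely generated groups, covers and pullbacks -/

/-- `σ` enumerates a finite symmetric generating set of `G`. -/
def IsSymmGen {G : Type*} [Group G] {k : ℕ} (σ : Fin k → G) : Prop :=
  Subgroup.closure (Set.range σ) = ⊤ ∧ ∀ i, (σ i)⁻¹ ∈ Set.range σ

/-- The canonical encoding of a free group via reduced words. -/
instance freeGroupEncodable {α : Type*} [DecidableEq α] [Encodable α] :
    Encodable (FreeGroup α) :=
  Encodable.ofLeftInjection FreeGroup.toWord (fun l => some (FreeGroup.mk l))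
    fun _ => congrArg some FreeGroup.mk_toWord

/-- The canonical homomorphism from the free group determined by `σ`. -/
def cover {G : Type*} [Group G] {k : ℕ} (σ : Fin k → G) : FreeGroup (Fin k) →* G :=
  FreeGroup.lift σ

/-- The pullback of a subshift along a group homomorphism. -/
def pullback {K G A : Type*} [Group K] [Group G] (ρ : K →* G) (X : Set (G → A)) :
    Set (K → A) :=
  (fun x => x ∘ ρ) '' X

/-- The group element represented by a word over the generators. -/
def wordVal {G : Type*} [Group G] {k : ℕ} (σ : Fin k → G) (w : List (Fin k × Bool)) : G :=
  cover σ (FreeGroup.mk w)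

/-- `G` is recursively presented w.r.t. `σ`: its word problem is recursively enumerable. -/
def RecursivelyPresented {G : Type*} [Group G] {k : ℕ} (σ : Fin k → G) : Prop :=
  ∃ f : ℕ → Option (List (Fin k × Bool)), Computable f ∧
    ∀ w : List (Fin k × Bool), (wordVal σ w = 1 ↔ ∃ n, f n = some w)

/-- The membership problem of the subgroup `H` in `G` is decidable w.r.t. `σ`. -/
def DecidableMembership {G : Type*} [Group G] {k : ℕ} (σ : Fin k → G)
    (H : Subgroup G) : Prop :=
  ∃ φ : List (Fin k × Bool) → Bool, Computable φ ∧
    ∀ w : List (Fin k × Bool), (φ w = true ↔ wordVal σ w ∈ H)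

/-- `G` has decidable word problem w.r.t. `σ`. -/
def DecidableWordProblem {G : Type*} [Group G] {k : ℕ} (σ : Fin k → G) : Prop :=
  ∃ φ : List (Fin k × Bool) → Bool, Computable φ ∧
    ∀ w : List (Fin k × Bool), (φ w = true ↔ wordVal σ w = 1)

/-- The set of configurations on the free group matching a coded pattern: a pattern is
coded as a list of pairs (code of a group element, code of a letter). -/
def codedCylinder {k : ℕ} {A : Type*} [Encodable A] (p : List (ℕ × ℕ)) :
    Set (FreeGroup (Fin k) → A) :=
  {x | ∀ q ∈ p, ∀ g : FreeGroup (Fin k),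
    Encodable.encode g = q.1 → Encodable.encode (x g) = q.2}

/-- `X` is an effective subshift: the complement of its pullback to the free group is the
union of the cylinders of a computably enumerable sequence of finitely supported patterns. -/
def IsEffective {G : Type*} [Group G] {k : ℕ} (σ : Fin k → G) {A : Type*} [Encodable A]
    (X : Set (G → A)) : Prop :=
  ∃ f : ℕ → List (ℕ × ℕ), Computable f ∧
    (pullback (cover σ) X)ᶜ = ⋃ n, codedCylinder (f n)

/-! ### Degree spectra -/

/-- The Medvedev degree of `P` belongs to `M_SFT(G)`: some nonempty `G`-SFT has the
Medvedev degree of `P`. -/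
def IsSFTDeg {G : Type*} [Group G] {k : ℕ} (σ : Fin k → G) (P : Set (ℕ → ℕ)) : Prop :=
  ∃ (n : ℕ) (X : Set (G → Fin n)), IsSFT X ∧ X.Nonempty ∧
    BaireEquiv (mSet (pullback (cover σ) X)) P

/-- The Medvedev degree of `P` belongs to `M_sof(G)`. -/
def IsSoficDeg {G : Type*} [Group G] {k : ℕ} (σ : Fin k → G) (P : Set (ℕ → ℕ)) : Prop :=
  ∃ (n : ℕ) (X : Set (G → Fin n)), IsSofic X ∧ X.Nonempty ∧
    BaireEquiv (mSet (pullback (cover σ) X)) P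

/-- The Medvedev degree of `P` belongs to `M_eff(G)`. -/
def IsEffDeg {G : Type*} [Group G] {k : ℕ} (σ : Fin k → G) (P : Set (ℕ → ℕ)) : Prop :=
  ∃ (n : ℕ) (X : Set (G → Fin n)), IsSubshift X ∧ IsEffective σ X ∧ X.Nonempty ∧
    BaireEquiv (mSet (pullback (cover σ) X)) P

/-! ### Word metrics and quasi-isometries -/

/-- The word length of `g` w.r.t. the (symmetric) generating map `σ`. -/
noncomputable def wordNorm {G : Type*} [Group G] {k : ℕ} (σ : Fin k → G) (g : G) : ℕ :=
  sInf {n | ∃ w : List (Fin k), w.length = n ∧ (w.map σ).prod = g}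

/-- The word metric on `G` w.r.t. `σ`, as a real number. -/
noncomputable def wordDist {G : Type*} [Group G] {k : ℕ} (σ : Fin k → G) (g g' : G) : ℝ :=
  (wordNorm σ (g⁻¹ * g') : ℝ)

/-- `f : G → H` is a quasi-isometry w.r.t. the word metrics given by `σ` and `τ`. -/
def IsQIGroups {G H : Type*} [Group G] [Group H] {k r : ℕ} (σ : Fin k → G)
    (τ : Fin r → H) (f : G → H) : Prop :=
  ∃ C : ℝ, 1 ≤ C ∧
    (∀ g g' : G, (1 / C) * wordDist σ g g' - C ≤ wordDist τ (f g) (f g') ∧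
      wordDist τ (f g) (f g') ≤ C * wordDist σ g g' + C) ∧
    ∀ h : H, ∃ g : G, wordDist τ h (f g) ≤ C

/-- `f : G → Y` is a quasi-isometry from the group `G` (with word metric from `σ`) to the
metric space `Y`. -/
def IsQIToSpace {G : Type*} [Group G] {k : ℕ} (σ : Fin k → G) {Y : Type*}
    [MetricSpace Y] (f : G → Y) : Prop :=
  ∃ C : ℝ, 1 ≤ C ∧
    (∀ g g' : G, (1 / C) * wordDist σ g g' - C ≤ dist (f g) (f g') ∧
      dist (f g) (f g') ≤ C * wordDist σ g g' + C) ∧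
    ∀ y : Y, ∃ g : G, dist y (f g) ≤ C

/-- `f : G → H` is computable w.r.t. the generating maps `σ` and `τ`: some computable map
on words sends each word representing `g` to a word representing `f g`. -/
def ComputableMap {G H : Type*} [Group G] [Group H] {k r : ℕ} (σ : Fin k → G)
    (τ : Fin r → H) (f : G → H) : Prop :=
  ∃ φ : List (Fin k × Bool) → List (Fin r × Bool), Computable φ ∧
    ∀ w : List (Fin k × Bool), wordVal τ (φ w) = f (wordVal σ w)


/-! ### Auxiliary development -/

section Reduce

variable {α : Type*} [Primcodable α] [DecidableEq α]

lemma primrec_reduce : Primrec (FreeGroup.reduce (α := α)) := by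
  have hite : Primrec (fun r : ((α × Bool) × List (α × Bool)) × (α × Bool) × List (α × Bool) =>
      if r.1.1.1 = r.2.1.1 ∧ r.1.1.2 = !r.2.1.2 then r.2.2 else r.1.1 :: r.2.1 :: r.2.2) := by
    have hc : PrimrecPred (fun r : ((α × Bool) × List (α × Bool)) × (α × Bool) × List (α × Bool) =>
        r.1.1.1 = r.2.1.1 ∧ r.1.1.2 = !r.2.1.2) :=
      PrimrecPred.and
        (Primrec.eq.comp ((Primrec.fst.comp Primrec.fst).comp Primrec.fst)
          ((Primrec.fst.comp Primrec.fst).comp Primrec.snd))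
        (Primrec.eq.comp ((Primrec.snd.comp Primrec.fst).comp Primrec.fst)
          ((Primrec.dom_bool Bool.not).comp ((Primrec.snd.comp Primrec.fst).comp Primrec.snd)))
    exact Primrec.ite hc (Primrec.snd.comp Primrec.snd)
      (Primrec.list_cons.comp (Primrec.fst.comp Primrec.fst)
        (Primrec.list_cons.comp (Primrec.fst.comp Primrec.snd)
          (Primrec.snd.comp Primrec.snd)))
  have hstep : Primrec (fun q : (α × Bool) × List (α × Bool) =>
      (List.casesOn q.2 [q.1] fun hd tl =>
        if q.1.1 = hd.1 ∧ q.1.2 = !hd.2 then tl else q.1 :: hd :: tl : List (α × Bool))) :=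
    Primrec.list_casesOn (f := fun q : (α × Bool) × List (α × Bool) => q.2)
      (g := fun q => [q.1])
      (h := fun q p => if q.1.1 = p.1.1 ∧ q.1.2 = !p.1.2 then p.2 else q.1 :: p.1 :: p.2)
      Primrec.snd (Primrec.list_cons.comp Primrec.fst (Primrec.const [])) hite.to₂
  have := Primrec.list_foldr (f := fun L : List (α × Bool) => L)
    (g := fun _ => ([] : List (α × Bool)))
    (h := fun _ q => (List.casesOn q.2 [q.1] fun hd tl =>
        if q.1.1 = hd.1 ∧ q.1.2 = !hd.2 then tl else q.1 :: hd :: tl : List (α × Bool)))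
    Primrec.id (Primrec.const []) (hstep.comp Primrec.snd).to₂
  refine this.of_eq fun L => ?_
  induction L with
  | nil => rfl
  | cons x L ih => rw [List.foldr_cons, ih, FreeGroup.reduce.cons]

end Reduce

section Theta

variable {k l : ℕ} (w : Fin k → FreeGroup (Fin l))

/-- The word data of the substitution. -/
def Fw : Fin k × Bool → List (Fin l × Bool) :=
  fun p => (cond p.2 (w p.1) (w p.1)⁻¹).toWord

lemma mk_flatMap (L : List (Fin k × Bool)) :
    FreeGroup.mk (L.flatMap (Fw w)) = FreeGroup.lift w (FreeGroup.mk L) := by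
  rw [FreeGroup.lift_mk]
  induction L with
  | nil => simp [← FreeGroup.one_eq_mk]
  | cons x L ih =>
      rw [List.flatMap_cons, ← FreeGroup.mul_mk, ih, List.map_cons, List.prod_cons]
      congr 1
      exact FreeGroup.mk_toWord

/-- Index translation on codes. -/
def thetaCode : ℕ → Option ℕ := fun n =>
  (Encodable.decode (α := FreeGroup (Fin k)) n).map
    (fun g => Encodable.encode (FreeGroup.lift w g))

lemma primrec_thetaCode : Primrec (thetaCode w) := by
  have : Primrec (fun n =>
      (Encodable.decode (α := List (Fin k × Bool)) n).map
        (fun L => Encodable.encode (FreeGroup.reduce (L.flatMap (Fw w))))) := by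
    have h2 : Primrec (fun p : ℕ × List (Fin k × Bool) =>
        Encodable.encode (FreeGroup.reduce (p.2.flatMap (Fw w)))) :=
      Primrec.encode.comp (primrec_reduce.comp
        (Primrec.list_flatMap Primrec.snd
          (((Primrec.dom_finite (Fw w)).comp Primrec.snd).to₂)))
    exact Primrec.option_map Primrec.decode h2.to₂
  refine this.of_eq fun n => ?_
  unfold thetaCode
  have hdec : Encodable.decode (α := FreeGroup (Fin k)) n
      = (Encodable.decode (α := List (Fin k × Bool)) n).map FreeGroup.mk := by
    show (Encodable.decode (α := List (Fin k × Bool)) n).bind (fun L => some (FreeGroup.mk L)) = _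
    cases Encodable.decode (α := List (Fin k × Bool)) n <;> rfl
  rw [hdec]
  cases Encodable.decode (α := List (Fin k × Bool)) n with
  | none => rfl
  | some L =>
      simp only [Option.map_some]
      congr 1
      show _ = Encodable.encode (FreeGroup.lift w (FreeGroup.mk L)).toWord
      rw [← mk_flatMap, FreeGroup.toWord_mk]

end Theta


section Collect

/-- Collect defined values of `f` into a list, as long as no gap occurred. -/
def collectF (f : ℕ → Option ℕ) : ℕ → List ℕ
  | 0 => []
  | n + 1 => collectF f n ++
      (Option.casesOn (f n) [] fun v => if (collectF f n).length = n then [v] else [])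

lemma collectF_length_le (f : ℕ → Option ℕ) : ∀ n, (collectF f n).length ≤ n := by
  intro n
  induction n with
  | zero => simp [collectF]
  | succ n ih =>
      rw [collectF, List.length_append]
      cases hf : f n with
      | none => simpa using Nat.le_succ_of_le ih
      | some v =>
          simp only
          split
          · simp only [List.length_cons, List.length_nil]; omega
          · simpa using Nat.le_succ_of_le ih

lemma collectF_mono_n (f : ℕ → Option ℕ) {m n : ℕ} (h : m ≤ n) :
    collectF f m <+: collectF f n := by
  induction n with
  | zero => cases Nat.le_zero.mp h; exact List.prefix_refl _
  | succ n ih =>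
      rcases Nat.lt_or_ge m (n + 1) with h' | h'
      · exact (ih (Nat.lt_succ_iff.mp h')).trans ⟨_, rfl⟩
      · cases Nat.le_antisymm h h'; exact List.prefix_refl _

lemma collectF_mono_f {f f' : ℕ → Option ℕ}
    (h : ∀ j v, f j = some v → f' j = some v) :
    ∀ n, collectF f n <+: collectF f' n := by
  intro n
  induction n with
  | zero => exact List.prefix_refl _
  | succ n ih =>
      rw [collectF, collectF]
      cases hf : f n with
      | none => simpa using ih.trans ⟨_, rfl⟩
      | some v =>
          rw [h n v hf]
          simp only
          by_cases hl : (collectF f n).length = n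
          · have hle := ih.length_le
            have hle' : (collectF f' n).length ≤ n := collectF_length_le f' n
            have heq : collectF f n = collectF f' n :=
              List.IsPrefix.eq_of_length ih (by omega)
            rw [← heq, if_pos hl]
          · rw [if_neg hl]
            simpa using ih.trans ⟨_, rfl⟩

lemma collectF_full {f : ℕ → Option ℕ} {n : ℕ} (h : ∀ j, j < n → f j ≠ none) :
    (collectF f n).length = n ∧ ∀ j, j < n → (collectF f n)[j]? = f j := by
  induction n with
  | zero => exact ⟨rfl, fun j hj => absurd hj (Nat.not_lt_zero j)⟩
  | succ n ih =>
      obtain ⟨hlen, hget⟩ := ih (fun j hj => h j (Nat.lt_succ_of_lt hj))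
      cases hf : f n with
      | none => exact absurd hf (h n (Nat.lt_succ_self n))
      | some v =>
          have hc : collectF f (n + 1) = collectF f n ++ [v] := by
            rw [collectF, hf]; simp [hlen]
          constructor
          · rw [hc, List.length_append, hlen]; rfl
          · intro j hj
            rcases Nat.lt_or_ge j n with h' | h'
            · rw [hc, List.getElem?_append_left (by omega), hget j h']
            · have : j = n := by omega
              subst this
              rw [hc, List.getElem?_append_right (by omega), hlen, hf]
              simp

end Collect

section Phi

variable {k l : ℕ} (w : Fin k → FreeGroup (Fin l))

/-- The oracle entry requested for output position `n`. -/
def outF (L : List ℕ) (n : ℕ) : Option ℕ :=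
  Option.casesOn (thetaCode w n) (some 0) fun m => L[m]?

/-- The monotone prefix functional realizing precomposition with `FreeGroup.lift w`. -/
def phiF (L : List ℕ) : List ℕ := collectF (outF w L) L.length

lemma prefix_getElem? {L1 L2 : List ℕ} (h : L1 <+: L2) {m v : ℕ}
    (hv : L1[m]? = some v) : L2[m]? = some v := by
  obtain ⟨t, rfl⟩ := h
  have hm : m < L1.length := by
    by_contra h'
    rw [List.getElem?_eq_none (by omega)] at hv
    cases hv
  rw [List.getElem?_append_left hm]
  exact hv

lemma primrec_phiF : Primrec (phiF w) := by
  have hout : Primrec (fun q : List ℕ × ℕ × List ℕ => outF w q.1 q.2.1) := by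
    refine Primrec.option_casesOn (o := fun q : List ℕ × ℕ × List ℕ => thetaCode w q.2.1)
      ((primrec_thetaCode w).comp (Primrec.fst.comp Primrec.snd))
      (Primrec.const (some 0)) ?_
    exact (Primrec.list_getElem?.comp (Primrec.fst.comp Primrec.fst) Primrec.snd).to₂
  have hh : Primrec (fun q : List ℕ × ℕ × List ℕ =>
      q.2.2 ++ (Option.casesOn (outF w q.1 q.2.1) [] fun v =>
        if q.2.2.length = q.2.1 then [v] else [])) := by
    refine Primrec.list_append.comp (Primrec.snd.comp Primrec.snd) ?_
    refine Primrec.option_casesOn hout (Primrec.const []) ?_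
    refine (Primrec.ite
      (Primrec.eq.comp
        (Primrec.list_length.comp ((Primrec.snd.comp Primrec.snd).comp Primrec.fst))
        ((Primrec.fst.comp Primrec.snd).comp Primrec.fst))
      (Primrec.list_cons.comp Primrec.snd (Primrec.const []))
      (Primrec.const [])).to₂
  have hmain : Primrec (fun L : List ℕ =>
      Nat.rec (motive := fun _ => List ℕ) []
        (fun n IH => IH ++ (Option.casesOn (outF w L n) [] fun v =>
          if IH.length = n then [v] else [])) L.length) :=
    Primrec.nat_rec' Primrec.list_length (Primrec.const []) hh.to₂
  refine hmain.of_eq fun L => ?_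
  show _ = collectF (outF w L) L.length
  generalize L.length = n
  induction n with
  | zero => rfl
  | succ n ih => rw [collectF, ← ih]

lemma phiF_mono {L1 L2 : List ℕ} (h12 : L1 <+: L2) : phiF w L1 <+: phiF w L2 := by
  refine (collectF_mono_f ?_ L1.length).trans (collectF_mono_n _ h12.length_le)
  intro j v hv
  unfold outF at hv ⊢
  cases ht : thetaCode w j with
  | none => rw [ht] at hv; exact hv
  | some m => rw [ht] at hv; exact prefix_getElem? h12 hv

lemma mainBaire {A : Type*} [Encodable A]
    {P : Set (FreeGroup (Fin k) → A)} {Q : Set (FreeGroup (Fin l) → A)}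
    (h : ∀ y ∈ Q, y ∘ (FreeGroup.lift w) ∈ P) : BaireLE (mSet P) (mSet Q) := by
  refine ⟨phiF w, (primrec_phiF w).to_comp, fun L1 L2 h12 => phiF_mono w h12, ?_⟩
  rintro z ⟨y, hyQ, rfl⟩
  refine ⟨confFun (y ∘ (FreeGroup.lift w)), ⟨y ∘ (FreeGroup.lift w), h y hyQ, rfl⟩, ?_⟩
  intro n
  set B := (Finset.range (n + 1)).sup
    (fun j => (thetaCode w j).elim 0 Nat.succ) with hB
  refine ⟨n + 1 + B, ?_⟩
  set L := pref (confFun y) (n + 1 + B) with hL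
  have hLlen : L.length = n + 1 + B := by simp [hL, pref]
  have key : ∀ j, j ≤ n → outF w L j = some (confFun (y ∘ (FreeGroup.lift w)) j) := by
    intro j hj
    unfold outF
    cases ht : thetaCode w j with
    | none =>
        have hdec : (Encodable.decode (α := FreeGroup (Fin k)) j) = none := by
          unfold thetaCode at ht
          exact Option.map_eq_none_iff.mp ht
        simp only [confFun, hdec, Option.map_none]
        rfl
    | some m =>
        obtain ⟨g, hg, hm⟩ : ∃ g, Encodable.decode (α := FreeGroup (Fin k)) j = some g ∧
            m = Encodable.encode (FreeGroup.lift w g) := by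
          unfold thetaCode at ht
          cases hd : Encodable.decode (α := FreeGroup (Fin k)) j with
          | none => rw [hd] at ht; cases ht
          | some g =>
              rw [hd] at ht
              exact ⟨g, rfl, (Option.some_inj.mp ht).symm⟩
        have hmK : m < n + 1 + B := by
          have hle : (thetaCode w j).elim 0 Nat.succ ≤ B := by
            rw [hB]
            exact Finset.le_sup (f := fun j => (thetaCode w j).elim 0 Nat.succ)
              (Finset.mem_range.mpr (by omega))
          rw [ht] at hle
          simp only [Option.elim] at hle
          omega
        have hLm : L[m]? = some (confFun y m) := by
          rw [hL]
          unfold pref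
          rw [List.getElem?_map, List.getElem?_range hmK]
          rfl
        simp only [hLm]
        congr 1
        simp only [confFun, hg, hm, Encodable.encodek, Option.map_some]
        rfl
  have hnz : ∀ j, j < n + 1 → outF w L j ≠ none := by
    intro j hj
    rw [key j (by omega)]
    simp
  obtain ⟨hlen, hget⟩ := collectF_full hnz
  have hpre : collectF (outF w L) (n + 1) <+: collectF (outF w L) L.length :=
    collectF_mono_n _ (by omega)
  have hval : (collectF (outF w L) (n + 1))[n]? = some (confFun (y ∘ (FreeGroup.lift w)) n) := by
    rw [hget n (by omega), key n (le_refl n)]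
  exact prefix_getElem? hpre hval

end Phi


/-- For any finitely generated group `G`, epimorphism `ρ : G → H` and subshift
`X ⊆ A^H`, we have `m(X) = m(ρ*(X))`. -/
theorem statement1 {G H : Type*} [Group G] [Group H] {A : Type*} [Finite A] [Encodable A]
    {k l : ℕ} (σ : Fin k → G) (hσ : IsSymmGen σ) (τ : Fin l → H) (hτ : IsSymmGen τ)
    (ρ : G →* H) (hρ : Function.Surjective ρ)
    (X : Set (H → A)) (hX : IsSubshift X) :
    MedEquiv (pullback (cover τ) X) (pullback (cover σ) (pullback ρ X)) := by
  classical
  have hcovσ : Function.Surjective (cover σ) :=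
    MonoidHom.range_eq_top.mp (by rw [cover, FreeGroup.range_lift_eq_closure]; exact hσ.1)
  have hcovτ : Function.Surjective (cover τ) :=
    MonoidHom.range_eq_top.mp (by rw [cover, FreeGroup.range_lift_eq_closure]; exact hτ.1)
  have hρσ : Function.Surjective (fun g => ρ (cover σ g)) := by
    intro h
    obtain ⟨g, hg⟩ := hρ h
    obtain ⟨u, hu⟩ := hcovσ g
    exact ⟨u, by simp only []; rw [hu, hg]⟩
  set w1 : Fin l → FreeGroup (Fin k) := fun i => Function.surjInv hρσ (τ i) with hw1def
  set w2 : Fin k → FreeGroup (Fin l) := fun i => Function.surjInv hcovτ (ρ (σ i)) with hw2def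
  have hw1 : ∀ i, ρ (cover σ (w1 i)) = τ i := fun i => Function.surjInv_eq hρσ (τ i)
  have hw2 : ∀ i, cover τ (w2 i) = ρ (σ i) := fun i => Function.surjInv_eq hcovτ _
  have e1 : ∀ g : FreeGroup (Fin l), ρ (cover σ (FreeGroup.lift w1 g)) = cover τ g := by
    intro g
    have heq : (ρ.comp (cover σ)).comp (FreeGroup.lift w1) = cover τ := by
      refine FreeGroup.ext_hom _ _ fun a => ?_
      show ρ (cover σ (FreeGroup.lift w1 (FreeGroup.of a))) = FreeGroup.lift τ (FreeGroup.of a)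
      rw [FreeGroup.lift_apply_of, FreeGroup.lift_apply_of]
      exact hw1 a
    exact DFunLike.congr_fun heq g
  have e2 : ∀ g : FreeGroup (Fin k), cover τ (FreeGroup.lift w2 g) = ρ (cover σ g) := by
    intro g
    have heq : (cover τ).comp (FreeGroup.lift w2) = ρ.comp (cover σ) := by
      refine FreeGroup.ext_hom _ _ fun a => ?_
      show cover τ (FreeGroup.lift w2 (FreeGroup.of a)) = ρ (FreeGroup.lift σ (FreeGroup.of a))
      rw [FreeGroup.lift_apply_of, FreeGroup.lift_apply_of]
      exact hw2 a
    exact DFunLike.congr_fun heq g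
  constructor
  · refine mainBaire w1 ?_
    rintro y ⟨z, ⟨x, hx, rfl⟩, rfl⟩
    refine ⟨x, hx, ?_⟩
    funext g
    exact congrArg x (e1 g).symm
  · refine mainBaire w2 ?_
    rintro y ⟨x, hx, rfl⟩
    refine ⟨x ∘ ⇑ρ, ⟨x, hx, rfl⟩, ?_⟩
    funext g
    exact congrArg x (e2 g).symm

end MedvedevFormal
end

section
/- Consider a short exact sequence of groups 1 → N → G →^ρ H → 1 in which both G and N are finitely generated. If X ⊆ A^H is a subshift of finite type, then the pullback ρ*(X) = {x ∘ ρ : x ∈ X} ⊆ A^G is a subshift of finite type; and if Y ⊆ B^H is a sofic subshift, then ρ*(Y) ⊆ B^G is a sofic subshift. -/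
namespace MedvedevFormal

/-- A "kernel pattern": forbids value `a` at `1` and value `b` at `n`. -/
def kerPat {G A : Type*} [Group G] [DecidableEq G] [DecidableEq A] (n : G) (a b : A) :
    Pattern G A :=
  ⟨{1, n}, fun d => if (d : G) = n then b else a⟩

theorem shift_shift {G A : Type*} [Group G] (g g' : G) (x : G → A) :
    shift g (shift g' x) = shift (g * g') x := by
  funext h; simp [shift, mul_assoc]

theorem shift_comp {G H A : Type*} [Group G] [Group H] (ρ : G →* H) (g : G) (x : H → A) :
    shift g (x ∘ ρ) = (shift (ρ g) x) ∘ ρ := by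
  funext h; simp [shift, Function.comp]

/-- The pullback of an SFT along a surjection with finitely generated kernel is an SFT. -/
theorem pullback_isSFT {G H A : Type*} [Group G] [Group H] [Finite A]
    (ρ : G →* H) (hρ : Function.Surjective ρ) (hN : Group.FG ↥ρ.ker)
    {X : Set (H → A)} (hX : IsSFT X) : IsSFT (pullback ρ X) := by
  classical
  haveI := Fintype.ofFinite A
  obtain ⟨F, hF⟩ := hX
  set s : H → G := Function.surjInv hρ with hsdef
  have hs : ∀ h, ρ (s h) = h := fun h => Function.surjInv_eq hρ h
  obtain ⟨T, hT⟩ : ∃ T : Finset ↥ρ.ker, Subgroup.closure (T : Set ↥ρ.ker) = ⊤ :=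
    Group.FG.out
  -- the lift of a pattern on H to a pattern on G
  set lift : Pattern H A → Pattern G A := fun q =>
    ⟨q.dom.image s, fun d => q.val ⟨ρ d.1, by
      obtain ⟨e, he, heq⟩ := Finset.mem_image.mp d.2
      rw [← heq, hs]; exact he⟩⟩ with hlift
  -- kernel patterns
  set kerPats : List (Pattern G A) := T.toList.flatMap (fun (t : ↥ρ.ker) =>
    ((Finset.univ : Finset (A × A)).toList).filterMap (fun ab =>
      if (t : G) ≠ 1 ∧ ab.1 ≠ ab.2 then some (kerPat (t : G) ab.1 ab.2) else none))
    with hkerPats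
  have memKer : ∀ (t : ↥ρ.ker), t ∈ T → ∀ a b : A, (t : G) ≠ 1 → a ≠ b →
      kerPat (t : G) a b ∈ kerPats := by
    intro t ht a b h1 hab
    rw [hkerPats, List.mem_flatMap]
    refine ⟨t, Finset.mem_toList.mpr ht, ?_⟩
    rw [List.mem_filterMap]
    exact ⟨(a, b), Finset.mem_toList.mpr (Finset.mem_univ _), by simp [h1, hab]⟩
  have kerSpec : ∀ p ∈ kerPats, ∃ (n : G) (a b : A),
      n ∈ ρ.ker ∧ n ≠ 1 ∧ a ≠ b ∧ p = kerPat n a b := by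
    intro p hp
    rw [hkerPats, List.mem_flatMap] at hp
    obtain ⟨t, _, hp⟩ := hp
    rw [List.mem_filterMap] at hp
    obtain ⟨ab, _, hab⟩ := hp
    by_cases hc : (t : G) ≠ 1 ∧ ab.1 ≠ ab.2
    · rw [if_pos hc] at hab
      exact ⟨(t : G), ab.1, ab.2, t.2, hc.1, hc.2, (Option.some_injective _ hab).symm⟩
    · rw [if_neg hc] at hab; exact absurd hab (by simp)
  refine ⟨kerPats ++ F.map lift, ?_⟩
  ext y
  constructor
  · rintro ⟨x, hxX, rfl⟩
    intro p hp g hm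
    rcases List.mem_append.mp hp with hp | hp
    · obtain ⟨n, a, b, hnk, hn1, hab, rfl⟩ := kerSpec p hp
      have h1 : (1 : G) ∈ ({1, n} : Finset G) := by simp
      have hn : n ∈ ({1, n} : Finset G) := by simp
      have e1 := hm ⟨1, h1⟩
      have e2 := hm ⟨n, hn⟩
      simp only [kerPat, shift, Function.comp] at e1 e2
      simp only [if_true] at e2
      rw [if_neg (Ne.symm hn1)] at e1
      apply hab
      rw [← e1, ← e2, mul_one, map_mul]
      have : ρ n = 1 := hnk
      rw [this, mul_one]
    · obtain ⟨q, hqF, rfl⟩ := List.mem_map.mp hp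
      rw [hF] at hxX
      apply hxX q hqF (ρ g)
      intro d
      have hd : s d.1 ∈ (lift q).dom := by
        rw [hlift]; exact Finset.mem_image_of_mem s d.2
      have h2 := hm ⟨s d.1, hd⟩
      simp only [hlift, shift, Function.comp] at h2 ⊢
      rw [map_mul, map_inv] at h2
      have hde : ρ (s d.1) = d.1 := hs d.1
      convert h2 using 2
      · rw [hde]
      · exact Subtype.ext hde.symm
  · intro hy
    -- constancy of y on the cosets of the kernel
    have hK : ∀ n ∈ ρ.ker, ∀ g : G, y g = y (g * n) := by
      have hsub : ∀ t ∈ T, ∀ g : G, y g = y (g * (t : G)) := by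
        intro t ht g
        by_cases h1 : (t : G) = 1
        · rw [h1, mul_one]
        by_contra hne
        refine hy (kerPat (t : G) (y g) (y (g * t))) (List.mem_append.mpr
          (Or.inl (memKer t ht _ _ h1 hne))) g⁻¹ ?_
        intro d
        have hd := d.2
        simp only [kerPat] at hd ⊢
        simp only [shift, inv_inv]
        rcases Finset.mem_insert.mp hd with h | h
        · rw [h, if_neg (by rw [h] at *; exact Ne.symm h1), mul_one]
        · rw [Finset.mem_singleton] at h
          rw [h, if_pos rfl]
      set S : Subgroup G :=
        { carrier := {n | ∀ g : G, y g = y (g * n)}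
          one_mem' := by intro g; rw [mul_one]
          mul_mem' := by
            intro a b ha hb g
            rw [ha g, hb (g * a), mul_assoc]
          inv_mem' := by
            intro a ha g
            have := ha (g * a⁻¹)
            rw [inv_mul_cancel_right] at this
            exact this.symm } with hS
      have hle : ρ.ker ≤ S := by
        have h2 : Subgroup.map ρ.ker.subtype ⊤ = ρ.ker := by
          rw [← MonoidHom.range_eq_map, Subgroup.subtype_range]
        rw [← h2, ← hT, MonoidHom.map_closure]
        apply (Subgroup.closure_le S).mpr
        rintro _ ⟨t, ht, rfl⟩
        exact hsub t ht
      intro n hn g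
      exact hle hn g
    have hconst : ∀ g g' : G, ρ g = ρ g' → y g = y g' := by
      intro g g' hgg
      have : g⁻¹ * g' ∈ ρ.ker := by
        rw [MonoidHom.mem_ker, map_mul, map_inv, hgg, inv_mul_cancel]
      have := hK _ this g
      rwa [mul_inv_cancel_left] at this
    refine ⟨fun h => y (s h), ?_, ?_⟩
    · rw [hF]
      intro q hq h hm
      obtain ⟨g, rfl⟩ := hρ h
      refine hy (lift q) (List.mem_append.mpr (Or.inr (List.mem_map.mpr ⟨q, hq, rfl⟩))) g ?_
      intro d
      obtain ⟨e, he, heq⟩ := Finset.mem_image.mp d.2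
      have hval : (lift q).val d = q.val ⟨e, he⟩ := by
        show q.val _ = q.val _
        congr 1
        apply Subtype.ext
        show ρ d.1 = e
        rw [← heq, hs]
      rw [hval]
      have := hm ⟨e, he⟩
      simp only [shift] at this ⊢
      rw [← this]
      apply hconst
      rw [← heq, map_mul, map_inv, hs, hs]
    · funext g
      show y (s (ρ g)) = y g
      exact (hconst g (s (ρ g)) (hs (ρ g)).symm).symm

/-- Given a short exact sequence `1 → N → G → H → 1` with `G` and `N` finitely
generated, the pullback of an SFT is an SFT and the pullback of a sofic subshift is
sofic. -/
theorem statement4 {G H : Type*} [Group G] [Group H] {A B : Type*} [Finite A] [Finite B]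
    (ρ : G →* H) (hρ : Function.Surjective ρ)
    (hG : Group.FG G) (hN : Group.FG ↥ρ.ker)
    (X : Set (H → A)) (hX : IsSFT X) (Y : Set (H → B)) (hY : IsSofic Y) :
    IsSFT (pullback ρ X) ∧ IsSofic (pullback ρ Y) := by
  classical
  refine ⟨pullback_isSFT ρ hρ hN hX, ?_⟩
  obtain ⟨B', hB', Z, φ, hZ, ⟨hmaps, hcont, hequiv⟩, himg⟩ := hY
  set s : H → G := Function.surjInv hρ with hsdef
  have hs : ∀ h, ρ (s h) = h := fun h => Function.surjInv_eq hρ h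
  have hcomp : ∀ x : H → B', (x ∘ ρ) ∘ s = x := by
    intro x; funext h; exact congrArg x (hs h)
  set ψ : (G → B') → (G → B) := fun y => (φ (y ∘ s)) ∘ ρ with hψ
  -- shift invariance of Z
  have hZinv : ∀ x ∈ Z, ∀ h : H, shift h x ∈ Z := by
    obtain ⟨FZ, hFZ⟩ := hZ
    rw [hFZ]
    intro x hx h q hq g hm
    apply hx q hq (g * h)
    intro d
    have := hm d
    rwa [shift_shift] at this
  -- image equality
  have himage : ψ '' pullback ρ Z = pullback ρ Y := by
    ext z
    constructor
    · rintro ⟨y, ⟨x, hxZ, rfl⟩, rfl⟩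
      exact ⟨φ x, hmaps hxZ, by rw [hψ]; simp only [hcomp]⟩
    · rintro ⟨w, hwY, rfl⟩
      rw [← himg] at hwY
      obtain ⟨x, hxZ, rfl⟩ := hwY
      exact ⟨x ∘ ρ, ⟨x, hxZ, rfl⟩, by rw [hψ]; simp only [hcomp]⟩
  refine ⟨B', hB', pullback ρ Z, ψ, pullback_isSFT ρ hρ hN hZ, ⟨?_, ?_, ?_⟩, himage⟩
  · intro y hy
    exact himage ▸ Set.mem_image_of_mem ψ hy
  · -- continuity
    letI tB' : TopologicalSpace B' := ⊥
    letI tB : TopologicalSpace B := ⊥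
    letI : TopologicalSpace (G → B') := prodiscrete G B'
    letI : TopologicalSpace (G → B) := prodiscrete G B
    letI : TopologicalSpace (H → B') := prodiscrete H B'
    letI : TopologicalSpace (H → B) := prodiscrete H B
    have c1 : Continuous (fun y : G → B' => y ∘ s) :=
      continuous_pi fun h => continuous_apply (s h)
    have c3 : Continuous (fun x : H → B => x ∘ ρ) :=
      continuous_pi fun g => continuous_apply (ρ g)
    have hmt : Set.MapsTo (fun y : G → B' => y ∘ s) (pullback ρ Z) Z := by
      rintro y ⟨x, hxZ, rfl⟩
      simpa [hcomp] using hxZ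
    have c2 : ContinuousOn (fun y : G → B' => φ (y ∘ s)) (pullback ρ Z) :=
      hcont.comp c1.continuousOn hmt
    exact c3.comp_continuousOn c2
  · rintro y ⟨x, hxZ, rfl⟩ g
    have h1 : shift g (x ∘ ρ) = (shift (ρ g) x) ∘ ρ := shift_comp ρ g x
    rw [hψ]
    simp only [h1, hcomp]
    rw [hequiv x hxZ (ρ g)]
    exact (shift_comp ρ g (φ x)).symm

end MedvedevFormal
end

section
/- Let G and H be finitely generated groups with decidable word problem. If there exists a computable quasi-isometry f : H → G, then there exists a computable coarse inverse g : G → H of f; in particular g is a quasi-isometry and sup over h ∈ H of d_H(g(f(h)), h) is finite. -/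
namespace MedvedevFormal

/-! ### Auxiliary material for statement10 -/

section Statement10Aux

variable {G : Type*} [Group G] {k : ℕ}

/-- The value of a single signed letter. -/
def letterVal (σ : Fin k → G) (p : Fin k × Bool) : G := cond p.2 (σ p.1) (σ p.1)⁻¹

theorem wordVal_eq_prod (σ : Fin k → G) (w : List (Fin k × Bool)) :
    wordVal σ w = (w.map (letterVal σ)).prod :=
  FreeGroup.lift_mk

theorem wordVal_append (σ : Fin k → G) (w₁ w₂ : List (Fin k × Bool)) :
    wordVal σ (w₁ ++ w₂) = wordVal σ w₁ * wordVal σ w₂ := by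
  simp [wordVal_eq_prod]

/-- Formal inverse of a signed word. -/
def wInv {k : ℕ} (w : List (Fin k × Bool)) : List (Fin k × Bool) :=
  (w.map fun p => (p.1, !p.2)).reverse

theorem wordVal_wInv (σ : Fin k → G) (w : List (Fin k × Bool)) :
    wordVal σ (wInv w) = (wordVal σ w)⁻¹ := by
  induction w with
  | nil => simp [wInv, wordVal_eq_prod]
  | cons p w ih =>
    have h1 : wInv (p :: w) = wInv w ++ [(p.1, !p.2)] := by simp [wInv]
    have h2 : wordVal σ (p :: w) = letterVal σ p * wordVal σ w := by
      simp [wordVal_eq_prod]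
    have h3 : wordVal σ [(p.1, !p.2)] = (letterVal σ p)⁻¹ := by
      obtain ⟨i, b⟩ := p
      cases b <;> simp [wordVal_eq_prod, letterVal]
    rw [h1, wordVal_append, ih, h2, h3, mul_inv_rev]

theorem wordVal_posWord (σ : Fin k → G) (v : List (Fin k)) :
    wordVal σ (v.map fun i => (i, true)) = (v.map σ).prod := by
  rw [wordVal_eq_prod, List.map_map]
  congr 1

theorem exists_posWord {σ : Fin k → G} (hσ : IsSymmGen σ) (g : G) :
    ∃ v : List (Fin k), (v.map σ).prod = g := by
  have hsub : (Set.range σ)⁻¹ ⊆ Set.range σ := by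
    intro x hx
    rw [Set.mem_inv] at hx
    obtain ⟨i, hi⟩ := hx
    have : x = (σ i)⁻¹ := by rw [hi, inv_inv]
    rw [this]
    exact hσ.2 i
  have htop : Submonoid.closure (Set.range σ) = ⊤ := by
    have h1 := Subgroup.closure_toSubmonoid (Set.range σ)
    rw [hσ.1, Set.union_eq_self_of_subset_right hsub] at h1
    rw [← h1]
    rfl
  have hg : g ∈ Submonoid.closure (Set.range σ) := htop ▸ Submonoid.mem_top g
  obtain ⟨l, hl, hprod⟩ := Submonoid.exists_list_of_mem_closure hg
  suffices h : ∀ l : List G, (∀ y ∈ l, y ∈ Set.range σ) → ∃ v : List (Fin k), v.map σ = l by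
    obtain ⟨v, hv⟩ := h l hl
    exact ⟨v, by rw [hv, hprod]⟩
  intro l
  induction l with
  | nil => exact fun _ => ⟨[], rfl⟩
  | cons a l ih =>
    intro hmem
    obtain ⟨i, hi⟩ := hmem a List.mem_cons_self
    obtain ⟨v, hv⟩ := ih fun y hy => hmem y (List.mem_cons_of_mem _ hy)
    exact ⟨i :: v, by simp [hi, hv]⟩

theorem wordNorm_le_length (σ : Fin k → G) {g : G} (v : List (Fin k))
    (h : (v.map σ).prod = g) : wordNorm σ g ≤ v.length :=
  Nat.sInf_le ⟨v, rfl, h⟩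

theorem exists_word_norm {σ : Fin k → G} (hσ : IsSymmGen σ) (g : G) :
    ∃ v : List (Fin k), v.length = wordNorm σ g ∧ (v.map σ).prod = g := by
  have hne : {n | ∃ w : List (Fin k), w.length = n ∧ (w.map σ).prod = g}.Nonempty := by
    obtain ⟨v, hv⟩ := exists_posWord hσ g
    exact ⟨v.length, v, rfl, hv⟩
  exact Nat.sInf_mem hne

theorem wordNorm_mul_le {σ : Fin k → G} (hσ : IsSymmGen σ) (g g' : G) :
    wordNorm σ (g * g') ≤ wordNorm σ g + wordNorm σ g' := by
  obtain ⟨v, hvl, hvp⟩ := exists_word_norm hσ g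
  obtain ⟨v', hvl', hvp'⟩ := exists_word_norm hσ g'
  have h := wordNorm_le_length σ (v ++ v') (g := g * g') (by
    rw [List.map_append, List.prod_append, hvp, hvp'])
  simpa [hvl, hvl'] using h

theorem wordNorm_inv_le {σ : Fin k → G} (hσ : IsSymmGen σ) (g : G) :
    wordNorm σ g⁻¹ ≤ wordNorm σ g := by
  obtain ⟨v, hvl, hvp⟩ := exists_word_norm hσ g
  choose ι hι using fun i => hσ.2 i
  have hp : ∀ u : List (Fin k), ((u.reverse.map ι).map σ).prod = ((u.map σ).prod)⁻¹ := by
    intro u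
    induction u with
    | nil => simp
    | cons a u ih =>
      rw [List.reverse_cons, List.map_append, List.map_append, List.prod_append, ih]
      simp [hι, mul_inv_rev]
  have := wordNorm_le_length σ (v.reverse.map ι) (by rw [hp, hvp])
  simpa [hvl] using this

theorem wordNorm_inv {σ : Fin k → G} (hσ : IsSymmGen σ) (g : G) :
    wordNorm σ g⁻¹ = wordNorm σ g :=
  le_antisymm (wordNorm_inv_le hσ g) (by simpa using wordNorm_inv_le hσ g⁻¹)

theorem wordDist_nonneg (σ : Fin k → G) (g g' : G) : 0 ≤ wordDist σ g g' :=
  Nat.cast_nonneg _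

theorem wordDist_comm {σ : Fin k → G} (hσ : IsSymmGen σ) (g g' : G) :
    wordDist σ g g' = wordDist σ g' g := by
  unfold wordDist
  congr 1
  rw [← wordNorm_inv hσ, mul_inv_rev, inv_inv]

theorem wordDist_triangle {σ : Fin k → G} (hσ : IsSymmGen σ) (a b c : G) :
    wordDist σ a c ≤ wordDist σ a b + wordDist σ b c := by
  unfold wordDist
  rw [← Nat.cast_add, Nat.cast_le]
  have h := wordNorm_mul_le hσ (a⁻¹ * b) (b⁻¹ * c)
  simpa [mul_assoc] using h

/-- The search predicate used to compute the coarse inverse. -/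
def searchPred {k r : ℕ} (N : ℕ) (φG : List (Fin k × Bool) → Bool)
    (φf : List (Fin r × Bool) → List (Fin k × Bool))
    (w : List (Fin k × Bool)) (n : ℕ) : Bool :=
  Option.casesOn (Encodable.decode (α := List (Fin r × Bool) × List (Fin k)) n) false
    fun uv => decide (uv.2.length ≤ N) &&
      φG (φf uv.1 ++ (uv.2.map fun i => (i, true)) ++ wInv w)

theorem searchPred_computable {k r : ℕ} (N : ℕ) {φG : List (Fin k × Bool) → Bool}
    {φf : List (Fin r × Bool) → List (Fin k × Bool)}
    (hφGc : Computable φG) (hφfc : Computable φf) :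
    Computable₂ (searchPred N φG φf) := by
  have hbody : Computable₂ fun (q : (List (Fin k × Bool) × ℕ))
      (uv : List (Fin r × Bool) × List (Fin k)) =>
      (decide (uv.2.length ≤ N) &&
        φG (φf uv.1 ++ (uv.2.map fun i => (i, true)) ++ wInv q.1)) := by
    have hc : Computable fun (x : (List (Fin k × Bool) × ℕ) ×
        (List (Fin r × Bool) × List (Fin k))) => decide (x.2.2.length ≤ N) :=
      (Primrec.nat_le.comp (Primrec.list_length.comp (Primrec.snd.comp Primrec.snd))
        (Primrec.const N)).decide.to_comp
    have hA : Computable fun (x : (List (Fin k × Bool) × ℕ) ×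
        (List (Fin r × Bool) × List (Fin k))) => φf x.2.1 :=
      hφfc.comp (Computable.fst.comp Computable.snd)
    have hB : Computable fun (x : (List (Fin k × Bool) × ℕ) ×
        (List (Fin r × Bool) × List (Fin k))) =>
        (x.2.2.map fun i => (i, true)) :=
      (Primrec.list_map (Primrec.snd.comp Primrec.snd)
        ((Primrec.pair Primrec.snd (Primrec.const true)).to₂ :
          Primrec₂ fun (_ : (List (Fin k × Bool) × ℕ) ×
            (List (Fin r × Bool) × List (Fin k))) (i : Fin k) => (i, true))).to_comp
    have hC : Computable fun (x : (List (Fin k × Bool) × ℕ) ×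
        (List (Fin r × Bool) × List (Fin k))) => wInv x.1.1 :=
      (Primrec.list_reverse.comp (Primrec.list_map (Primrec.fst.comp Primrec.fst)
        ((Primrec.pair (Primrec.fst.comp Primrec.snd)
          ((Primrec.dom_bool Bool.not).comp (Primrec.snd.comp Primrec.snd))).to₂ :
          Primrec₂ fun (_ : (List (Fin k × Bool) × ℕ) ×
            (List (Fin r × Bool) × List (Fin k))) (p : Fin k × Bool) =>
            (p.1, !p.2)))).to_comp
    have hφ : Computable fun (x : (List (Fin k × Bool) × ℕ) ×
        (List (Fin r × Bool) × List (Fin k))) =>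
        φG (φf x.2.1 ++ (x.2.2.map fun i => (i, true)) ++ wInv x.1.1) :=
      hφGc.comp (Computable.list_append.comp (Computable.list_append.comp hA hB) hC)
    exact (Computable.cond hc hφ (Computable.const false)).of_eq fun x => by
      cases h : decide (x.2.2.length ≤ N) <;> simp [h]
  exact Computable.option_casesOn (Computable.decode.comp Computable.snd)
    (Computable.const false) hbody

theorem searchPred_iff {H : Type*} [Group H] {r : ℕ} (σ : Fin k → G) (τ : Fin r → H)
    (f : H → G) {φG : List (Fin k × Bool) → Bool}
    {φf : List (Fin r × Bool) → List (Fin k × Bool)}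
    (hφG : ∀ w, φG w = true ↔ wordVal σ w = 1)
    (hφf : ∀ w, wordVal σ (φf w) = f (wordVal τ w)) (N : ℕ)
    (w : List (Fin k × Bool)) (n : ℕ) :
    searchPred N φG φf w n = true ↔
      ∃ u v, Encodable.decode (α := List (Fin r × Bool) × List (Fin k)) n = some (u, v) ∧
        v.length ≤ N ∧ f (wordVal τ u) * (v.map σ).prod = wordVal σ w := by
  unfold searchPred
  cases hdn : Encodable.decode (α := List (Fin r × Bool) × List (Fin k)) n with
  | none => simp
  | some uv =>
    obtain ⟨u, v⟩ := uv
    simp only [Bool.and_eq_true, decide_eq_true_eq, Option.some.injEq]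
    rw [hφG, wordVal_append, wordVal_append, wordVal_wInv, hφf, wordVal_posWord,
      mul_inv_eq_one]
    constructor
    · rintro ⟨h1, h2⟩
      exact ⟨u, v, rfl, h1, h2⟩
    · rintro ⟨u', v', heq, h1, h2⟩
      obtain ⟨rfl, rfl⟩ := Prod.mk.injEq .. ▸ heq
      exact ⟨h1, h2⟩

theorem computable_nat_find {α : Type*} [Primcodable α] {p : α → ℕ → Bool}
    (hp : Computable₂ p) (htot : ∀ a, ∃ n, p a n = true) :
    Computable fun a => Nat.find (htot a) := by
  have h1 : Partrec fun a => Nat.rfind fun n => (p a n : Part Bool) :=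
    Partrec.rfind hp.partrec₂
  exact Partrec.of_eq_tot h1 fun a => by
    refine Nat.mem_rfind.2 ?_
    exact ⟨Part.mem_some_iff.2 (Nat.find_spec (htot a)).symm,
      fun {m} hm => Part.mem_some_iff.2
        (by simpa using Nat.find_min (htot a) hm)⟩

end Statement10Aux

/-- If `G` and `H` have decidable word problem and `f : H → G` is a computable
quasi-isometry, then `f` has a computable coarse inverse `g : G → H`; in particular `g`
is a quasi-isometry and `g ∘ f` is at uniformly bounded distance from the identity. -/
theorem statement10 {G H : Type*} [Group G] [Group H] {k r : ℕ}
    (σ : Fin k → G) (hσ : IsSymmGen σ) (τ : Fin r → H) (hτ : IsSymmGen τ)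
    (hwpG : DecidableWordProblem σ) (hwpH : DecidableWordProblem τ)
    (f : H → G) (hfc : ComputableMap τ σ f) (hfqi : IsQIGroups τ σ f) :
    ∃ g : G → H, ComputableMap σ τ g ∧ IsQIGroups σ τ g ∧
      ∃ C : ℝ, ∀ h : H, wordDist τ (g (f h)) h ≤ C := by
  classical
  obtain ⟨φG, hφGc, hφG⟩ := hwpG
  obtain ⟨φf, hφfc, hφf⟩ := hfc
  obtain ⟨C, hC1, hCb, hCs⟩ := hfqi
  have hC0 : (0 : ℝ) < C := lt_of_lt_of_le one_pos hC1
  set N : ℕ := ⌈C⌉₊ with hNdef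
  have hCN : C ≤ (N : ℝ) := Nat.le_ceil C
  have hN0 : (0 : ℝ) ≤ (N : ℝ) := Nat.cast_nonneg _
  -- totality of the search
  have htot : ∀ w, ∃ n, searchPred N φG φf w n = true := by
    intro w
    obtain ⟨h, hh⟩ := hCs (wordVal σ w)
    have hd : wordNorm σ ((f h)⁻¹ * wordVal σ w) ≤ N := by
      have h1 : wordDist σ (f h) (wordVal σ w) ≤ C := by rwa [wordDist_comm hσ]
      unfold wordDist at h1
      exact_mod_cast h1.trans hCN
    obtain ⟨v, hvl, hvp⟩ := exists_word_norm hσ ((f h)⁻¹ * wordVal σ w)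
    obtain ⟨p, hp⟩ := exists_posWord hτ h
    refine ⟨Encodable.encode ((p.map fun i => (i, true)), v),
      (searchPred_iff σ τ f hφG hφf N w _).2
        ⟨p.map fun i => (i, true), v, Encodable.encodek _, hvl ▸ hd, ?_⟩⟩
    rw [wordVal_posWord, hp, hvp, mul_inv_cancel_left]
  -- the computable word map
  set F : List (Fin k × Bool) → ℕ := fun w => Nat.find (htot w) with hFdef
  set Φ : List (Fin k × Bool) → List (Fin r × Bool) := fun w =>
    ((Encodable.decode (α := List (Fin r × Bool) × List (Fin k)) (F w)).map Prod.fst).getD []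
    with hΦdef
  have hFc : Computable F := computable_nat_find (searchPred_computable N hφGc hφfc) htot
  have hΦc : Computable Φ :=
    Computable.option_getD
      (Computable.option_map (Computable.decode.comp hFc)
        (Computable.fst.comp Computable.snd))
      (Computable.const [])
  -- specification of Φ
  have hkey : ∀ w, wordDist σ (f (wordVal τ (Φ w))) (wordVal σ w) ≤ (N : ℝ) := by
    intro w
    have hs := Nat.find_spec (htot w)
    rw [searchPred_iff σ τ f hφG hφf] at hs
    obtain ⟨u, v, hdn, hlen, heq⟩ := hs
    have hΦw : Φ w = u := by rw [hΦdef]; simp [hFdef, hdn]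
    rw [hΦw]
    unfold wordDist
    have hval : (f (wordVal τ u))⁻¹ * wordVal σ w = (v.map σ).prod := by
      rw [← heq, inv_mul_cancel_left]
    have hle : wordNorm σ ((f (wordVal τ u))⁻¹ * wordVal σ w) ≤ N :=
      le_trans (hval ▸ wordNorm_le_length σ v rfl) hlen
    exact_mod_cast hle
  -- Φ depends only on the represented element
  have hΦdep : ∀ w w', wordVal σ w = wordVal σ w' → Φ w = Φ w' := by
    intro w w' hww
    have hPeq : searchPred N φG φf w = searchPred N φG φf w' := by
      funext n
      rw [Bool.eq_iff_iff, searchPred_iff σ τ f hφG hφf, searchPred_iff σ τ f hφG hφf, hww]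
    have hFeq : F w = F w' := by
      rw [hFdef]
      simp only
      exact le_antisymm
        (Nat.find_le (by rw [hPeq]; exact Nat.find_spec (htot w')))
        (Nat.find_le (by rw [← hPeq]; exact Nat.find_spec (htot w)))
    rw [hΦdef]
    simp only [hFeq]
  -- the coarse inverse
  have hWex : ∀ x : G, ∃ w, wordVal σ w = x := by
    intro x
    obtain ⟨v, hv⟩ := exists_posWord hσ x
    exact ⟨v.map fun i => (i, true), by rw [wordVal_posWord, hv]⟩
  choose W hW using hWex
  refine ⟨fun x => wordVal τ (Φ (W x)), ⟨Φ, hΦc, ?_⟩, ?_⟩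
  · intro w
    exact congrArg (wordVal τ) (hΦdep w (W (wordVal σ w)) (by rw [hW]))
  · set g : G → H := fun x => wordVal τ (Φ (W x)) with hgdef
    have hclose : ∀ x : G, wordDist σ (f (g x)) x ≤ (N : ℝ) := by
      intro x
      have h1 := hkey (W x)
      rwa [hW] at h1
    set C' : ℝ := C ^ 2 + 2 * N * C + C + 2 * N + 1 with hC'def
    have hC'1 : (1 : ℝ) ≤ C' := by nlinarith
    have hC'0 : (0 : ℝ) < C' := lt_of_lt_of_le one_pos hC'1
    have hCC' : C ≤ C' := by nlinarith
    have hcoarse : ∀ h : H, wordDist τ (g (f h)) h ≤ C * ((N : ℝ) + C) := by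
      intro h
      have h1 := (hCb (g (f h)) h).1
      have h2 : wordDist σ (f (g (f h))) (f h) ≤ (N : ℝ) := hclose (f h)
      have h3 : 0 ≤ wordDist τ (g (f h)) h := wordDist_nonneg τ _ _
      have h4 : (1 / C) * wordDist τ (g (f h)) h ≤ (N : ℝ) + C := by linarith
      rw [one_div] at h4
      nlinarith [mul_le_mul_of_nonneg_left h4 (le_of_lt hC0),
        mul_inv_cancel₀ (ne_of_gt hC0)]
    refine ⟨⟨C', hC'1, ?_, ?_⟩, C * ((N : ℝ) + C), hcoarse⟩
    · intro x x'
      have hd0 : 0 ≤ wordDist σ x x' := wordDist_nonneg σ x x'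
      have he0 : 0 ≤ wordDist τ (g x) (g x') := wordDist_nonneg τ _ _
      have h1 := (hCb (g x) (g x')).1
      have h2 := (hCb (g x) (g x')).2
      have h3 : wordDist σ (f (g x)) (f (g x')) ≤ wordDist σ x x' + 2 * N := by
        have t1 := wordDist_triangle hσ (f (g x)) x (f (g x'))
        have t2 := wordDist_triangle hσ x x' (f (g x'))
        have t3 := hclose x
        have t4 : wordDist σ x' (f (g x')) ≤ (N : ℝ) := by
          rw [wordDist_comm hσ]; exact hclose x'
        linarith
      have h4 : wordDist σ x x' ≤ wordDist σ (f (g x)) (f (g x')) + 2 * N := by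
        have t1 := wordDist_triangle hσ x (f (g x)) x'
        have t2 := wordDist_triangle hσ (f (g x)) (f (g x')) x'
        have t3 : wordDist σ x (f (g x)) ≤ (N : ℝ) := by
          rw [wordDist_comm hσ]; exact hclose x
        have t4 : wordDist σ (f (g x')) x' ≤ (N : ℝ) := hclose x'
        linarith
      constructor
      · -- lower bound
        have h5 : wordDist σ x x' ≤ C * wordDist τ (g x) (g x') + C + 2 * N := by linarith
        have h6 : wordDist σ x x' ≤ C' * wordDist τ (g x) (g x') + C' * C' := by nlinarith
        have h7 : (1 / C') * wordDist σ x x' ≤ wordDist τ (g x) (g x') + C' := by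
          rw [one_div]
          have := mul_le_mul_of_nonneg_left h6 (le_of_lt (inv_pos.2 hC'0))
          calc C'⁻¹ * wordDist σ x x'
              ≤ C'⁻¹ * (C' * wordDist τ (g x) (g x') + C' * C') := this
            _ = wordDist τ (g x) (g x') + C' := by
                field_simp
        linarith
      · -- upper bound
        have h5 : (1 / C) * wordDist τ (g x) (g x') ≤ wordDist σ x x' + 2 * N + C := by
          linarith
        rw [one_div] at h5
        have h6 : wordDist τ (g x) (g x') ≤ C * (wordDist σ x x' + 2 * N + C) := by
          have := mul_le_mul_of_nonneg_left h5 (le_of_lt hC0)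
          rw [← mul_assoc, mul_inv_cancel₀ (ne_of_gt hC0), one_mul] at this
          exact this
        nlinarith
    · intro h
      refine ⟨f h, ?_⟩
      have h1 := hcoarse h
      rw [wordDist_comm hτ] at h1
      nlinarith

end MedvedevFormal
end
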